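/- Let n be a positive integer, let M be a symmetric positive definite n×n real matrix, let a < b be real numbers, and let w : [a,b] → ℝⁿ be a continuous function. Then (∫_a^b w(s) ds)ᵀ M (∫_a^b w(s) ds) ≤ (b − a) · ∫_a^b w(s)ᵀ M w(s) ds. -/

import Mathlib

open Matrix intervalIntegral

lemma sq_int_le (a b : ℝ) (hab : a < b) (g : ℝ → ℝ) (hg : ContinuousOn g (Set.Icc a b)) :
    (∫ s in a..b, g s)^2 ≤ (b - a) * ∫ s in a..b, (g s)^2 := by
  have huIcc : Set.uIcc a b = Set.Icc a b := Set.uIcc_of_le hab.le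
  have hgi : IntervalIntegrable g MeasureTheory.volume a b :=
    (huIcc ▸ hg).intervalIntegrable
  have hg2i : IntervalIntegrable (fun s => (g s)^2) MeasureTheory.volume a b :=
    (huIcc ▸ (hg.pow 2)).intervalIntegrable
  set I := ∫ s in a..b, g s with hI
  set J := ∫ s in a..b, (g s)^2 with hJ
  set c := I / (b - a) with hc
  have h0 : 0 ≤ ∫ s in a..b, (g s - c)^2 :=
    intervalIntegral.integral_nonneg hab.le (fun s _ => sq_nonneg _)
  have hexp : (∫ s in a..b, (g s - c)^2) = J - 2*c*I + c^2*(b-a) := by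
    have : ∀ s, (g s - c)^2 = (g s)^2 - (2*c) * g s + c^2 := by intro s; ring
    simp_rw [this]
    rw [intervalIntegral.integral_add ((hg2i.sub (hgi.const_mul _))) intervalIntegrable_const,
      intervalIntegral.integral_sub hg2i (hgi.const_mul _),
      intervalIntegral.integral_const_mul, intervalIntegral.integral_const]
    simp [← hI, ← hJ, smul_eq_mul]
    ring
  rw [hexp] at h0
  have hba : 0 < b - a := by linarith
  have hc' : c * (b - a) = I := by rw [hc, div_mul_cancel₀ _ hba.ne']
  nlinarith [h0, hc', sq_nonneg c]


/-- Jensen's inequality for vector-valued integrals with a symmetric positive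
definite weight matrix `M`. -/
theorem jensen_integral_quadratic_form
    (n : ℕ) (hn : 0 < n) (M : Matrix (Fin n) (Fin n) ℝ)
    (hMsymm : M.IsSymm) (hMpd : M.PosDef)
    (a b : ℝ) (hab : a < b)
    (w : ℝ → (Fin n → ℝ)) (hw : ContinuousOn w (Set.Icc a b)) :
    (∫ s in a..b, w s) ⬝ᵥ (M *ᵥ (∫ s in a..b, w s)) ≤
      (b - a) * ∫ s in a..b, (w s) ⬝ᵥ (M *ᵥ w s) := by
  obtain ⟨B, hB⟩ : ∃ B : Matrix (Fin n) (Fin n) ℝ, M = Bᴴ * B := by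
    open scoped MatrixOrder Matrix.Norms.L2Operator in
    exact CStarAlgebra.nonneg_iff_eq_star_mul_self.mp hMpd.posSemidef.nonneg
  have hBT : Bᴴ = Bᵀ := rfl
  have huIcc : Set.uIcc a b = Set.Icc a b := Set.uIcc_of_le hab.le
  have hwint : IntervalIntegrable w MeasureTheory.volume a b :=
    (huIcc ▸ hw).intervalIntegrable
  -- quadratic form identity
  have hquad : ∀ u : Fin n → ℝ, u ⬝ᵥ (M *ᵥ u) = ∑ i, ((B *ᵥ u) i)^2 := by
    intro u
    rw [hB, hBT, ← Matrix.mulVec_mulVec, Matrix.dotProduct_mulVec, Matrix.vecMul_transpose]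
    simp [dotProduct, sq]
  -- components of the integral
  have hcomp : ∀ j, (∫ s in a..b, w s) j = ∫ s in a..b, w s j := by
    intro j
    exact ((ContinuousLinearMap.proj j : (Fin n → ℝ) →L[ℝ] ℝ).intervalIntegral_comp_comm
      hwint).symm
  have hgcont : ∀ i, ContinuousOn (fun s => (B *ᵥ w s) i) (Set.Icc a b) := by
    intro i
    simp only [Matrix.mulVec, dotProduct]
    exact continuousOn_finset_sum _ fun j _ =>
      continuousOn_const.mul ((continuous_apply j).comp_continuousOn hw)
  have hgint : ∀ i, IntervalIntegrable (fun s => (B *ᵥ w s) i) MeasureTheory.volume a b :=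
    fun i => (huIcc ▸ hgcont i).intervalIntegrable
  -- LHS component identity
  have hBv : ∀ i, (B *ᵥ (∫ s in a..b, w s)) i = ∫ s in a..b, (B *ᵥ w s) i := by
    intro i
    simp only [Matrix.mulVec, dotProduct, hcomp]
    rw [intervalIntegral.integral_finset_sum (fun j _ =>
      ((huIcc ▸ ((continuous_apply j).comp_continuousOn hw)).intervalIntegrable).const_mul (B i j))]
    simp_rw [intervalIntegral.integral_const_mul]
  rw [hquad]
  calc ∑ i, ((B *ᵥ (∫ s in a..b, w s)) i)^2
      = ∑ i, (∫ s in a..b, (B *ᵥ w s) i)^2 := by simp_rw [hBv]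
    _ ≤ ∑ i, (b - a) * ∫ s in a..b, ((B *ᵥ w s) i)^2 := by
        exact Finset.sum_le_sum fun i _ => sq_int_le a b hab _ (hgcont i)
    _ = (b - a) * ∫ s in a..b, (w s) ⬝ᵥ (M *ᵥ w s) := by
        rw [← Finset.mul_sum, ← intervalIntegral.integral_finset_sum]
        · simp_rw [hquad]
        · intro i _
          exact (huIcc ▸ ((hgcont i).pow 2)).intervalIntegrable
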